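/- arXiv:2204.04072 — 11 statements merged into one kernel-verified Lean document; each statement's English description precedes it below -/
import Mathlib

section
/- Let N ≥ 1, let p : Fin N → ℝ be strictly positive, let d : Fin N → ℝ, and let a : Fin N → Fin N → ℝ be an arbitrary family of rates. Define the generator action (L x)_i = ∑_{j ≠ i} (a i j · x_j − a j i · x_i) for any vector x. Then the following algebraic identity holds: ∑_i ( 2 d_i (L d)_i / p_i − d_i² (L p)_i / p_i² ) = − ∑_i ∑_{j ≠ i} a i j · (d_i/p_i − d_j/p_j)² · p_j. (This expresses the time derivative of the squared local Fisher distance as minus a sum of Fisher information flows, one per rate.) -/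
open Finset

lemma swap_offdiag {N : ℕ} (F : Fin N → Fin N → ℝ) :
    ∑ i, ∑ j ∈ univ.filter (fun j => j ≠ i), F i j
      = ∑ i, ∑ j ∈ univ.filter (fun j => j ≠ i), F j i :=
  Finset.sum_comm' (fun i j => by simp [ne_comm])

/-- The time derivative of the squared local Fisher distance decomposes as
minus a sum of Fisher information flows, one per rate. -/
theorem fisher_flow_decomposition (N : ℕ) (hN : 1 ≤ N)
    (p : Fin N → ℝ) (hp : ∀ i, 0 < p i) (d : Fin N → ℝ)
    (a : Fin N → Fin N → ℝ)
    (L : (Fin N → ℝ) → (Fin N → ℝ))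
    (hL : ∀ x i, L x i = ∑ j ∈ univ.filter (fun j => j ≠ i), (a i j * x j - a j i * x i)) :
    ∑ i, (2 * d i * L d i / p i - d i ^ 2 * L p i / p i ^ 2)
      = -∑ i, ∑ j ∈ univ.filter (fun j => j ≠ i),
          a i j * (d i / p i - d j / p j) ^ 2 * p j := by
  have hpne : ∀ i, p i ≠ 0 := fun i => (hp i).ne'
  have step1 : ∑ i, (2 * d i * L d i / p i - d i ^ 2 * L p i / p i ^ 2)
      = ∑ i, ∑ j ∈ univ.filter (fun j => j ≠ i),
          (a i j * (2 * d i * d j / p i - d i ^ 2 * p j / p i ^ 2)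
            + a j i * (- (d i ^ 2) / p i)) := by
    refine Finset.sum_congr rfl fun i _ => ?_
    rw [hL, hL, Finset.mul_sum, Finset.mul_sum, Finset.sum_div, Finset.sum_div,
      ← Finset.sum_sub_distrib]
    refine Finset.sum_congr rfl fun j _ => ?_
    have hi := hpne i
    field_simp
    ring
  have split : ∑ i, ∑ j ∈ univ.filter (fun j => j ≠ i),
      (a i j * (2 * d i * d j / p i - d i ^ 2 * p j / p i ^ 2)
        + a j i * (- (d i ^ 2) / p i))
      = (∑ i, ∑ j ∈ univ.filter (fun j => j ≠ i),
          a i j * (2 * d i * d j / p i - d i ^ 2 * p j / p i ^ 2))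
        + ∑ i, ∑ j ∈ univ.filter (fun j => j ≠ i),
          a j i * (- (d i ^ 2) / p i) := by
    rw [← Finset.sum_add_distrib]
    exact Finset.sum_congr rfl fun i _ => by rw [← Finset.sum_add_distrib]
  rw [step1, split, swap_offdiag (fun i j => a j i * (- (d i ^ 2) / p i)),
    ← Finset.sum_add_distrib, ← Finset.sum_neg_distrib]
  refine Finset.sum_congr rfl fun i _ => ?_
  rw [← Finset.sum_add_distrib, ← Finset.sum_neg_distrib]
  refine Finset.sum_congr rfl fun j _ => ?_
  have hi := hpne i
  have hj := hpne j
  field_simp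
  ring
end

section
/- Let N ≥ 1, let p : Fin N → ℝ be strictly positive, let d : Fin N → ℝ, and let a : Fin N → Fin N → ℝ satisfy a i j ≥ 0 for all i ≠ j. Define (L x)_i = ∑_{j ≠ i} (a i j · x_j − a j i · x_i). Then ∑_i ( 2 d_i (L d)_i / p_i − d_i² (L p)_i / p_i² ) ≤ 0. (Markovian generators contract the local Fisher distance at every strictly positive point.) -/
open Finset

/-- Markovian generators (all off-diagonal rates nonnegative) contract the
local Fisher distance at every strictly positive point. -/
theorem markovian_contracts_fisher (N : ℕ) (hN : 1 ≤ N)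
    (p : Fin N → ℝ) (hp : ∀ i, 0 < p i) (d : Fin N → ℝ)
    (a : Fin N → Fin N → ℝ) (ha : ∀ i j, i ≠ j → 0 ≤ a i j)
    (L : (Fin N → ℝ) → (Fin N → ℝ))
    (hL : ∀ x i, L x i = ∑ j ∈ univ.filter (fun j => j ≠ i), (a i j * x j - a j i * x i)) :
    ∑ i, (2 * d i * L d i / p i - d i ^ 2 * L p i / p i ^ 2) ≤ 0 := by
  have hp0 : ∀ i, p i ≠ 0 := fun i => (hp i).ne'
  have swap : ∀ g : Fin N → Fin N → ℝ,
      (∑ i, ∑ j ∈ univ.filter (fun j => j ≠ i), g j i)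
        = ∑ i, ∑ j ∈ univ.filter (fun j => j ≠ i), g i j := by
    intro g
    simp only [sum_filter]
    rw [Finset.sum_comm]
    refine sum_congr rfl fun i _ => sum_congr rfl fun j _ => ?_
    by_cases h : i = j <;> simp [h, Ne.symm, ne_comm]
  have step1 : ∑ i, (2 * d i * L d i / p i - d i ^ 2 * L p i / p i ^ 2)
      = ∑ i, ∑ j ∈ univ.filter (fun j => j ≠ i),
          ((a i j * (2 * d i * d j / p i - d i ^ 2 * p j / p i ^ 2))
            - a j i * (d i ^ 2 / p i)) := by
    refine sum_congr rfl fun i _ => ?_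
    rw [hL, hL, Finset.mul_sum, Finset.mul_sum, Finset.sum_div, Finset.sum_div,
      ← Finset.sum_sub_distrib]
    refine sum_congr rfl fun j _ => ?_
    field_simp [hp0]
    ring
  rw [step1]
  have step2 : ∑ i, ∑ j ∈ univ.filter (fun j => j ≠ i),
          ((a i j * (2 * d i * d j / p i - d i ^ 2 * p j / p i ^ 2))
            - a j i * (d i ^ 2 / p i))
      = ∑ i, ∑ j ∈ univ.filter (fun j => j ≠ i),
          (a i j * (2 * d i * d j / p i - d i ^ 2 * p j / p i ^ 2)
            - a i j * (d j ^ 2 / p j)) := by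
    simp only [Finset.sum_sub_distrib]
    rw [swap (fun x y => a x y * (d y ^ 2 / p y))]
  rw [step2]
  refine Finset.sum_nonpos fun i _ => Finset.sum_nonpos fun j hj => ?_
  have hji : j ≠ i := (mem_filter.mp hj).2
  have haij : 0 ≤ a i j := ha i j hji.symm
  have key : a i j * (2 * d i * d j / p i - d i ^ 2 * p j / p i ^ 2)
      - a i j * (d j ^ 2 / p j)
      = -(a i j * (p j * (d i / p i - d j / p j) ^ 2)) := by
    field_simp [hp0]
    ring
  rw [key]
  have : 0 ≤ a i j * (p j * (d i / p i - d j / p j) ^ 2) :=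
    mul_nonneg haij (mul_nonneg (hp j).le (sq_nonneg _))
  linarith
end

section
/- Let N ≥ 2 and let a : Fin N → Fin N → ℝ be a family of rates such that a i₀ j₀ < 0 for some pair i₀ ≠ j₀. Then there exist a strictly positive vector p : Fin N → ℝ with ∑_i p_i = 1 and a vector d : Fin N → ℝ with ∑_i d_i = 0 such that ∑_i ∑_{j ≠ i} a i j · (d_i/p_i − d_j/p_j)² · p_j < 0; equivalently, the local Fisher distance between p and p + d strictly increases under the generator with rates a. (Converse direction of Theorem 1: every non-Markovian generator dilates the Fisher metric at some point of the probability simplex.) -/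
open Finset

/-- Every non-Markovian generator (some negative rate) dilates the local
Fisher metric at some strictly positive point of the probability simplex. -/
theorem nonMarkovian_dilates_fisher (N : ℕ) (hN : 2 ≤ N)
    (a : Fin N → Fin N → ℝ) (i₀ j₀ : Fin N) (hij : i₀ ≠ j₀) (ha : a i₀ j₀ < 0) :
    ∃ (p : Fin N → ℝ) (d : Fin N → ℝ),
      (∀ i, 0 < p i) ∧ (∑ i, p i = 1) ∧ (∑ i, d i = 0) ∧
      ∑ i, ∑ j ∈ univ.filter (fun j => j ≠ i),
          a i j * (d i / p i - d j / p j) ^ 2 * p j < 0 := by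
  have hN' : (2:ℝ) ≤ (N:ℝ) := by exact_mod_cast hN
  set S1 : ℝ := ∑ j ∈ (univ.erase i₀).erase j₀, a i₀ j with hS1
  set S2 : ℝ := ∑ i ∈ univ.erase i₀, a i i₀ with hS2
  obtain ⟨ε, hε0, hεN, hεC⟩ : ∃ ε : ℝ, 0 < ε ∧ ((N:ℝ)-1)*ε < 1 ∧
      a i₀ j₀ * (1-((N:ℝ)-1)*ε) + S1*ε + S2*ε < 0 := by
    set C : ℝ := S1 + S2 - ((N:ℝ)-1) * a i₀ j₀ with hC
    refine ⟨min (1/(2*N)) ((-a i₀ j₀)/(2*(|C|+1))), ?_, ?_, ?_⟩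
    · have h1 : (0:ℝ) < 1/(2*N) := by positivity
      have h2 : (0:ℝ) < (-a i₀ j₀)/(2*(|C|+1)) := by
        apply div_pos (by linarith) (by positivity)
      exact lt_min h1 h2
    · have h1 : min (1/(2*(N:ℝ))) ((-a i₀ j₀)/(2*(|C|+1))) ≤ 1/(2*N) := min_le_left _ _
      have h2 : (0:ℝ) < (N:ℝ) := by linarith
      have : ((N:ℝ)-1) * (1/(2*N)) < 1 := by
        rw [mul_one_div, div_lt_one (by positivity)]
        linarith
      nlinarith [min_le_left (1/(2*(N:ℝ))) ((-a i₀ j₀)/(2*(|C|+1)))]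
    · set ε := min (1/(2*(N:ℝ))) ((-a i₀ j₀)/(2*(|C|+1))) with hε
      have hε0 : 0 < ε := by
        apply lt_min (by positivity)
        apply div_pos (by linarith) (by positivity)
      have h2 : ε ≤ (-a i₀ j₀)/(2*(|C|+1)) := min_le_right _ _
      have hCabs : C ≤ |C| := le_abs_self C
      have habs0 : (0:ℝ) ≤ |C| := abs_nonneg C
      have key : a i₀ j₀ * (1-((N:ℝ)-1)*ε) + S1*ε + S2*ε = a i₀ j₀ + ε * C := by
        rw [hC]; ring
      rw [key]
      have hεC' : ε * C ≤ ε * |C| := by nlinarith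
      have : ε * |C| < -a i₀ j₀ := by
        have h3 : ε * |C| ≤ ((-a i₀ j₀)/(2*(|C|+1))) * |C| := by nlinarith
        have h4 : ((-a i₀ j₀)/(2*(|C|+1))) * |C| < -a i₀ j₀ := by
          rw [div_mul_eq_mul_div, div_lt_iff₀ (by positivity)]
          nlinarith
        linarith
      linarith
  -- now construct p and d
  set p : Fin N → ℝ := fun i => if i = j₀ then 1-((N:ℝ)-1)*ε else ε with hp
  set u : Fin N → ℝ := fun i => if i = i₀ then 1-ε else -ε with hu
  set d : Fin N → ℝ := fun i => u i * p i with hd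
  have hppos : ∀ i, 0 < p i := by
    intro i
    simp only [hp]
    split <;> linarith
  have hpne : ∀ i, p i ≠ 0 := fun i => (hppos i).ne'
  have hdup : ∀ i, d i / p i = u i := by
    intro i; rw [hd]; exact mul_div_cancel_right₀ (u i) (hpne i)
  have hpsum : ∑ i, p i = 1 := by
    rw [← Finset.add_sum_erase _ _ (mem_univ j₀)]
    have h1 : ∀ i ∈ univ.erase j₀, p i = ε := by
      intro i hi
      simp only [hp]
      rw [if_neg (Finset.ne_of_mem_erase hi)]
    rw [Finset.sum_congr rfl h1, Finset.sum_const, Finset.card_erase_of_mem (mem_univ j₀)]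
    simp only [hp, if_pos rfl, Finset.card_univ, Fintype.card_fin]
    have : ((N - 1 : ℕ) : ℝ) = (N:ℝ) - 1 := by
      have : 1 ≤ N := by omega
      push_cast [this]; ring
    rw [nsmul_eq_mul, this]; ring
  refine ⟨p, d, hppos, hpsum, ?_, ?_⟩
  · -- sum d = 0
    have hpi₀ : p i₀ = ε := by simp only [hp]; rw [if_neg hij]
    rw [← Finset.add_sum_erase _ _ (mem_univ i₀)]
    have h1 : ∀ i ∈ univ.erase i₀, d i = -ε * p i := by
      intro i hi
      simp only [hd, hu]
      rw [if_neg (Finset.ne_of_mem_erase hi)]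
    rw [Finset.sum_congr rfl h1, ← Finset.mul_sum]
    have h2 : ∑ i ∈ univ.erase i₀, p i = 1 - ε := by
      have := Finset.add_sum_erase _ p (mem_univ i₀)
      rw [hpsum] at this
      rw [hpi₀] at this
      linarith
    rw [h2]
    have hdi₀ : d i₀ = (1-ε)*ε := by
      show u i₀ * p i₀ = (1-ε)*ε
      rw [hpi₀]
      show (if i₀ = i₀ then 1-ε else -ε) * ε = (1-ε)*ε
      rw [if_pos rfl]
    rw [hdi₀]; ring
  · -- the main inequality
    have key : ∀ i, ∑ j ∈ univ.filter (fun j => j ≠ i),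
        a i j * (d i / p i - d j / p j) ^ 2 * p j
        = if i = i₀ then ∑ j ∈ univ.erase i₀, a i₀ j * p j else a i i₀ * ε := by
      intro i
      rw [Finset.filter_ne']
      by_cases hii : i = i₀
      · rw [if_pos hii]
        subst hii
        apply Finset.sum_congr rfl
        intro j hj
        rw [hdup, hdup]
        have hji : j ≠ i := Finset.ne_of_mem_erase hj
        have e1 : u i = 1 - ε := by
          show (if i = i then 1-ε else -ε) = 1 - ε
          rw [if_pos rfl]
        have e2 : u j = -ε := by
          show (if j = i then 1-ε else -ε) = -ε
          rw [if_neg hji]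
        rw [e1, e2]
        ring
      · rw [if_neg hii]
        rw [Finset.sum_eq_single_of_mem i₀ (Finset.mem_erase.mpr ⟨Ne.symm hii, mem_univ i₀⟩)]
        · rw [hdup, hdup]
          have hpi₀ : p i₀ = ε := by simp only [hp]; rw [if_neg hij]
          simp only [hu, if_neg hii, if_pos rfl, hpi₀]
          ring
        · intro j hj hji₀
          rw [hdup, hdup]
          simp only [hu, if_neg hii, if_neg hji₀]
          ring
    simp only [key]
    rw [← Finset.add_sum_erase _ _ (mem_univ i₀), if_pos rfl]
    have h1 : ∀ i ∈ univ.erase i₀, (if i = i₀ then ∑ j ∈ univ.erase i₀, a i₀ j * p j else a i i₀ * ε) = a i i₀ * ε := by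
      intro i hi
      rw [if_neg (Finset.ne_of_mem_erase hi)]
    rw [Finset.sum_congr rfl h1]
    have hj₀mem : j₀ ∈ univ.erase i₀ := Finset.mem_erase.mpr ⟨Ne.symm hij, mem_univ j₀⟩
    rw [← Finset.add_sum_erase _ _ hj₀mem]
    have h2 : ∀ j ∈ (univ.erase i₀).erase j₀, a i₀ j * p j = a i₀ j * ε := by
      intro j hj
      have : p j = ε := by
        simp only [hp]; rw [if_neg (Finset.ne_of_mem_erase hj)]
      rw [this]
    rw [Finset.sum_congr rfl h2, ← Finset.sum_mul, ← Finset.sum_mul]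
    have hpj₀ : p j₀ = 1 - ((N:ℝ)-1)*ε := by simp only [hp, if_pos rfl]
    rw [hpj₀]
    exact hεC
end

section
/- Let T ∈ ℝ^{N×N} be a column-stochastic matrix (nonnegative entries, ∑_i T_{ij} = 1 for all j), let π : Fin N → ℝ be strictly positive with (T π)_i > 0 for all i, and let d : Fin N → ℝ be arbitrary. Then ∑_i (T d)_i² / (T π)_i ≤ ∑_i d_i² / π_i. (Data-processing inequality for the Fisher/χ² quadratic form: the local Fisher distance contracts under every stochastic map.) -/
open Finset

/-- Data-processing inequality for the Fisher/χ² quadratic form: the local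
Fisher distance contracts under every column-stochastic map. -/
theorem fisher_data_processing (N : ℕ)
    (T : Matrix (Fin N) (Fin N) ℝ)
    (hTnonneg : ∀ i j, 0 ≤ T i j) (hTcol : ∀ j, ∑ i, T i j = 1)
    (π : Fin N → ℝ) (hπ : ∀ i, 0 < π i) (hTπ : ∀ i, 0 < T.mulVec π i)
    (d : Fin N → ℝ) :
    ∑ i, (T.mulVec d i) ^ 2 / T.mulVec π i ≤ ∑ i, d i ^ 2 / π i := by
  have key : ∀ i, (T.mulVec d i) ^ 2 / T.mulVec π i ≤ ∑ j, T i j * (d j ^ 2 / π j) := by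
    intro i
    rw [div_le_iff₀ (hTπ i)]
    have cs := Finset.sum_sq_le_sum_mul_sum_of_sq_eq_mul Finset.univ
      (r := fun j => T i j * d j)
      (f := fun j => T i j * π j)
      (g := fun j => T i j * (d j ^ 2 / π j))
      (fun j _ => mul_nonneg (hTnonneg i j) (hπ j).le)
      (fun j _ => mul_nonneg (hTnonneg i j) (div_nonneg (sq_nonneg _) (hπ j).le))
      (fun j _ => by
        show (T i j * d j) ^ 2 = T i j * π j * (T i j * (d j ^ 2 / π j))
        rw [mul_div_assoc', mul_div_assoc']
        rw [eq_div_iff (hπ j).ne']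
        ring)
    calc (T.mulVec d i) ^ 2 = (∑ j, T i j * d j) ^ 2 := by
          simp [Matrix.mulVec, dotProduct]
      _ ≤ (∑ j, T i j * π j) * ∑ j, T i j * (d j ^ 2 / π j) := cs
      _ = (∑ j, T i j * (d j ^ 2 / π j)) * T.mulVec π i := by
          rw [mul_comm]; simp [Matrix.mulVec, dotProduct]
  calc ∑ i, (T.mulVec d i) ^ 2 / T.mulVec π i ≤ ∑ i, ∑ j, T i j * (d j ^ 2 / π j) :=
        Finset.sum_le_sum fun i _ => key i
    _ = ∑ j, (∑ i, T i j) * (d j ^ 2 / π j) := by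
        rw [Finset.sum_comm]; simp [Finset.sum_mul]
    _ = ∑ j, d j ^ 2 / π j := by simp [hTcol]
end

section
/- Let N ≥ 2, M ≥ 1. Let π : Fin N → ℝ be a strictly positive probability vector and w : Fin M → ℝ a strictly positive probability vector. Let a : Fin N → Fin N → ℝ be rates such that a 0 1 < 0, a i j ≥ 0 for every off-diagonal pair (i,j) ≠ (0,1), and a 1 0 · π_0 + a 0 1 · π_1 ≥ 0. Then for every d : Fin N × Fin M → ℝ, ∑_{i ≠ j} ∑_α a i j · ( d_{(i,α)}/(π_i w_α) − d_{(j,α)}/(π_j w_α) )² · π_j w_α ≥ 0. (Core inequality of Theorem 2: although the generator a ⊗ 1 acting on the system plus ancilla is non-Markovian, the local Fisher distance does not increase at any point of the form π ⊗ w, so no revival of Fisher distance can be observed in the image of the evolution.) -/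
open Finset

lemma aux_per_alpha (N : ℕ) [NeZero N] (hN : 2 ≤ N)
    (π : Fin N → ℝ) (hπpos : ∀ i, 0 < π i)
    (a : Fin N → Fin N → ℝ)
    (hpos : ∀ i j : Fin N, i ≠ j → (i, j) ≠ ((0 : Fin N), (1 : Fin N)) → 0 ≤ a i j)
    (hbal : 0 ≤ a 1 0 * π 0 + a 0 1 * π 1)
    (c : ℝ) (hc : 0 ≤ c) (x : Fin N → ℝ) :
    0 ≤ ∑ i, ∑ j ∈ univ.filter (fun j => j ≠ i),
          a i j * (x i - x j) ^ 2 * (π j * c) := by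
  have h01 : (0 : Fin N) ≠ 1 := by
    simp [Fin.ext_iff, Fin.val_one']
    omega
  simp only [Finset.sum_filter]
  rw [← Finset.sum_product']
  set g : Fin N × Fin N → ℝ :=
    fun p => if p.2 ≠ p.1 then a p.1 p.2 * (x p.1 - x p.2) ^ 2 * (π p.2 * c) else 0 with hg
  show 0 ≤ ∑ p ∈ univ ×ˢ univ, g p
  have hsub : ({((0 : Fin N), (1 : Fin N)), ((1 : Fin N), (0 : Fin N))} : Finset (Fin N × Fin N))
      ⊆ univ ×ˢ univ := by
    intro p _; simp
  have hpair : (0 ≤ ∑ p ∈ ({((0 : Fin N), (1 : Fin N)), ((1 : Fin N), (0 : Fin N))} :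
      Finset (Fin N × Fin N)), g p) := by
    rw [Finset.sum_pair (by simp [h01])]
    simp only [hg, if_pos h01.symm, if_pos h01, ne_eq]
    nlinarith [mul_nonneg (mul_nonneg hbal (sq_nonneg (x 0 - x 1))) hc,
      sq_nonneg (x 0 - x 1)]
  refine le_trans hpair (Finset.sum_le_sum_of_subset_of_nonneg hsub ?_)
  intro p _ hp
  by_cases hpp : p.2 = p.1
  · simp [hg, hpp]
  · have hne : p.1 ≠ p.2 := fun h => hpp h.symm
    have hnot : (p.1, p.2) ≠ ((0 : Fin N), (1 : Fin N)) := by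
      intro h
      apply hp
      simp only [Finset.mem_insert, Finset.mem_singleton]
      left
      exact Prod.ext (congrArg Prod.fst h) (congrArg Prod.snd h)
    have ha := hpos p.1 p.2 hne hnot
    simp only [hg, if_pos (Ne.symm hne |>.symm), ne_eq, hpp, not_false_iff, if_true]
    exact mul_nonneg (mul_nonneg ha (sq_nonneg _)) (mul_nonneg (hπpos _).le hc)

/-- Core inequality of Theorem 2 (single copy): although the generator
`a ⊗ 1` on system plus ancilla is non-Markovian (`a 0 1 < 0`), the local Fisher distance
does not increase at any product point `π ⊗ w`, provided `a 1 0 · π 0 + a 0 1 · π 1 ≥ 0`. -/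
theorem no_fisher_revival_on_image (N M : ℕ) [NeZero N] (hN : 2 ≤ N) (hM : 1 ≤ M)
    (π : Fin N → ℝ) (hπpos : ∀ i, 0 < π i) (hπsum : ∑ i, π i = 1)
    (w : Fin M → ℝ) (hwpos : ∀ α, 0 < w α) (hwsum : ∑ α, w α = 1)
    (a : Fin N → Fin N → ℝ)
    (hneg : a 0 1 < 0)
    (hpos : ∀ i j : Fin N, i ≠ j → (i, j) ≠ ((0 : Fin N), (1 : Fin N)) → 0 ≤ a i j)
    (hbal : 0 ≤ a 1 0 * π 0 + a 0 1 * π 1)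
    (d : Fin N × Fin M → ℝ) :
    0 ≤ ∑ i, ∑ j ∈ univ.filter (fun j => j ≠ i), ∑ α,
          a i j * (d (i, α) / (π i * w α) - d (j, α) / (π j * w α)) ^ 2 * (π j * w α) := by
  have step : ∀ i : Fin N, (∑ j ∈ univ.filter (fun j => j ≠ i), ∑ α,
          a i j * (d (i, α) / (π i * w α) - d (j, α) / (π j * w α)) ^ 2 * (π j * w α))
      = ∑ α, ∑ j ∈ univ.filter (fun j => j ≠ i),
          a i j * (d (i, α) / (π i * w α) - d (j, α) / (π j * w α)) ^ 2 * (π j * w α) :=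
    fun i => Finset.sum_comm
  simp only [step]
  rw [Finset.sum_comm]
  refine Finset.sum_nonneg fun α _ => ?_
  exact aux_per_alpha N hN π hπpos a hpos hbal (w α) (hwpos α).le
    (fun i => d (i, α) / (π i * w α))
end

section
/- Let N ≥ 2, and let n ≥ 1 and M ≥ 1. Let π : Fin N → ℝ and q : Fin M → ℝ be strictly positive probability vectors, and define the product weights P(𝐣,α) = (∏_{l} π_{𝐣(l)}) · q_α for 𝐣 : Fin n → Fin N and α : Fin M. Let a : Fin N → Fin N → ℝ be rates with a 0 1 < 0, a i j ≥ 0 for every off-diagonal (i,j) ≠ (0,1), and a 1 0 · π_0 + a 0 1 · π_1 ≥ 0. Then for every d : (Fin n → Fin N) × Fin M → ℝ, ∑_{l : Fin n} ∑_{𝐣} ∑_{i ≠ 𝐣(l)} ∑_α a i (𝐣(l)) · ( d(update(𝐣,l,i),α)/P(update(𝐣,l,i),α) − d(𝐣,α)/P(𝐣,α) )² · P(𝐣,α) ≥ 0, where update(𝐣,l,i) is the string 𝐣 with its l-th entry replaced by i. (Many-copy version of Theorem 2: n copies of the channel plus an ancilla still cannot witness this non-Markovian generator via Fisher-distance revivals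 at points of the form π^{⊗n} ⊗ q.) -/
open Finset

lemma key_single (N : ℕ) [NeZero N] (hN : 2 ≤ N) (π : Fin N → ℝ) (hπpos : ∀ i, 0 < π i)
    (a : Fin N → Fin N → ℝ)
    (hpos : ∀ i j : Fin N, i ≠ j → (i, j) ≠ ((0 : Fin N), (1 : Fin N)) → 0 ≤ a i j)
    (hbal : 0 ≤ a 1 0 * π 0 + a 0 1 * π 1)
    (x : Fin N → ℝ) :
    0 ≤ ∑ k : Fin N, ∑ i ∈ univ.filter (fun i => i ≠ k),
        a i k * (x i - x k) ^ 2 * π k := by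
  have h01 : (0 : Fin N) ≠ 1 := by
    have h1 : (1 : Fin N).val = 1 := by
      simp [Fin.val_one', Nat.mod_eq_of_lt hN]
    intro h
    have h0 : (0 : Fin N).val = (1 : Fin N).val := congrArg Fin.val h
    rw [h1] at h0
    simp at h0
  have hconv : (∑ k : Fin N, ∑ i ∈ univ.filter (fun i => i ≠ k),
        a i k * (x i - x k) ^ 2 * π k)
      = ∑ p ∈ (univ : Finset (Fin N × Fin N)).filter (fun p => p.2 ≠ p.1),
          a p.2 p.1 * (x p.2 - x p.1) ^ 2 * π p.1 := by
    rw [Finset.sum_filter, Fintype.sum_prod_type]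
    exact Finset.sum_congr rfl fun k _ => by rw [Finset.sum_filter]
  rw [hconv]
  set s := (univ : Finset (Fin N × Fin N)).filter (fun p => p.2 ≠ p.1) with hs
  have hm1 : ((1 : Fin N), (0 : Fin N)) ∈ s := by
    simp [hs, h01]
  have hm2 : ((0 : Fin N), (1 : Fin N)) ∈ (s.erase ((1 : Fin N), (0 : Fin N))) := by
    simp [hs, h01, Ne.symm h01, Prod.ext_iff]
  rw [← Finset.add_sum_erase _ _ hm1, ← Finset.add_sum_erase _ _ hm2]
  have hrest : 0 ≤ ∑ p ∈ (s.erase ((1:Fin N),(0:Fin N))).erase ((0:Fin N),(1:Fin N)),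
      a p.2 p.1 * (x p.2 - x p.1) ^ 2 * π p.1 := by
    apply Finset.sum_nonneg
    intro p hp
    have hp1 := Finset.mem_erase.mp hp
    have hp2 := Finset.mem_erase.mp hp1.2
    have hne : p.2 ≠ p.1 := by
      have := hp2.2
      simp [hs] at this
      exact this
    have hne01 : (p.2, p.1) ≠ ((0 : Fin N), (1 : Fin N)) := by
      intro h
      apply hp2.1
      have h' := Prod.ext_iff.mp h
      exact Prod.ext_iff.mpr ⟨h'.2, h'.1⟩
    exact mul_nonneg (mul_nonneg (hpos _ _ hne hne01) (sq_nonneg _)) (hπpos _).le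
  have hfirst : 0 ≤ a (0:Fin N) (1:Fin N) * (x 0 - x 1) ^ 2 * π 1
      + a (1:Fin N) (0:Fin N) * (x 1 - x 0) ^ 2 * π 0 := by
    have : a (0:Fin N) 1 * (x 0 - x 1) ^ 2 * π 1 + a 1 0 * (x 1 - x 0) ^ 2 * π 0
        = (a 1 0 * π 0 + a 0 1 * π 1) * (x 0 - x 1) ^ 2 := by ring
    rw [this]
    exact mul_nonneg hbal (sq_nonneg _)
  linarith

lemma key_single' (N : ℕ) [NeZero N] (hN : 2 ≤ N) (π : Fin N → ℝ) (hπpos : ∀ i, 0 < π i)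
    (a : Fin N → Fin N → ℝ)
    (hpos : ∀ i j : Fin N, i ≠ j → (i, j) ≠ ((0 : Fin N), (1 : Fin N)) → 0 ≤ a i j)
    (hbal : 0 ≤ a 1 0 * π 0 + a 0 1 * π 1)
    (x : Fin N → ℝ) (c : ℝ) (hc : 0 ≤ c) :
    0 ≤ ∑ k : Fin N, ∑ i ∈ univ.filter (fun i => i ≠ k),
        a i k * (x i - x k) ^ 2 * (π k * c) := by
  have hfac : (∑ k : Fin N, ∑ i ∈ univ.filter (fun i => i ≠ k),
        a i k * (x i - x k) ^ 2 * (π k * c))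
      = (∑ k : Fin N, ∑ i ∈ univ.filter (fun i => i ≠ k),
        a i k * (x i - x k) ^ 2 * π k) * c := by
    rw [Finset.sum_mul]
    refine Finset.sum_congr rfl fun k _ => ?_
    rw [Finset.sum_mul]
    exact Finset.sum_congr rfl fun i _ => by ring
  rw [hfac]
  exact mul_nonneg (key_single N hN π hπpos a hpos hbal x) hc

/-- Many-copy version of Theorem 2: `n` copies of the channel plus an
ancilla still cannot witness the non-Markovian generator (with single negative rate
`a 0 1` balanced by `a 1 0 · π 0 + a 0 1 · π 1 ≥ 0`) via Fisher-distance revivals at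
product points `π^{⊗n} ⊗ q`. -/
theorem no_fisher_revival_many_copies (N n M : ℕ) [NeZero N]
    (hN : 2 ≤ N) (hn : 1 ≤ n) (hM : 1 ≤ M)
    (π : Fin N → ℝ) (hπpos : ∀ i, 0 < π i) (hπsum : ∑ i, π i = 1)
    (q : Fin M → ℝ) (hqpos : ∀ α, 0 < q α) (hqsum : ∑ α, q α = 1)
    (P : (Fin n → Fin N) → Fin M → ℝ)
    (hP : ∀ (js : Fin n → Fin N) (α : Fin M), P js α = (∏ l, π (js l)) * q α)
    (a : Fin N → Fin N → ℝ)
    (hneg : a 0 1 < 0)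
    (hpos : ∀ i j : Fin N, i ≠ j → (i, j) ≠ ((0 : Fin N), (1 : Fin N)) → 0 ≤ a i j)
    (hbal : 0 ≤ a 1 0 * π 0 + a 0 1 * π 1)
    (d : (Fin n → Fin N) × Fin M → ℝ) :
    0 ≤ ∑ l : Fin n, ∑ js : Fin n → Fin N,
          ∑ i ∈ univ.filter (fun i => i ≠ js l), ∑ α : Fin M,
            a i (js l) *
              (d (Function.update js l i, α) / P (Function.update js l i) α
                - d (js, α) / P js α) ^ 2 * P js α := by
  apply Finset.sum_nonneg
  intro l _
  set e := Equiv.funSplitAt l (Fin N) with he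
  rw [← Equiv.sum_comp e.symm]
  rw [Fintype.sum_prod_type]
  rw [Finset.sum_comm]
  apply Finset.sum_nonneg
  intro g _
  have hval : ∀ (k : Fin N), (e.symm (k, g)) l = k := by
    intro k
    simp [he]
  have hupd : ∀ (k i : Fin N), Function.update (e.symm (k, g)) l i = e.symm (i, g) := by
    intro k i
    funext j
    by_cases h : j = l
    · subst h; simp [he]
    · simp [he, Function.update_of_ne h, h]
  set c : Fin M → ℝ := fun α => (∏ j : {j // j ≠ l}, π (g j)) * q α with hc
  have hcpos : ∀ α, 0 ≤ c α := by
    intro α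
    exact mul_nonneg (Finset.prod_nonneg fun j _ => (hπpos _).le) (hqpos α).le
  have hPfact : ∀ (k : Fin N) (α : Fin M),
      P (e.symm (k, g)) α = π k * c α := by
    intro k α
    rw [hP]
    have h1 : (∏ j, π ((e.symm (k, g)) j))
        = π ((e.symm (k, g)) l) * ∏ j ∈ ({l}ᶜ : Finset (Fin n)), π ((e.symm (k, g)) j) :=
      Fintype.prod_eq_mul_prod_compl l _
    have h2 : (∏ j ∈ ({l}ᶜ : Finset (Fin n)), π ((e.symm (k, g)) j))
        = ∏ j : {j // j ≠ l}, π (g j) := by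
      rw [show ({l}ᶜ : Finset (Fin n)) = univ.filter (fun j => j ≠ l) from by ext j; simp,
        Finset.prod_subtype (p := fun j => j ≠ l) (univ.filter (fun j => (j : Fin n) ≠ l))
          (by simp) (fun j => π ((e.symm (k, g)) j))]
      refine Finset.prod_congr rfl fun j _ => ?_
      have : (e.symm (k, g)) j.1 = g j := by
        simp [he, j.2]
      rw [this]
    rw [h1, h2, hval]
    ring
  set X : Fin M → Fin N → ℝ := fun α k => d (e.symm (k, g), α) / (π k * c α) with hX
  have hrw : (∑ k : Fin N, ∑ i ∈ univ.filter (fun i => i ≠ (e.symm (k, g)) l),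
        ∑ α : Fin M, a i ((e.symm (k, g)) l) *
          (d (Function.update (e.symm (k, g)) l i, α) / P (Function.update (e.symm (k, g)) l i) α
            - d (e.symm (k, g), α) / P (e.symm (k, g)) α) ^ 2 * P (e.symm (k, g)) α)
      = ∑ α : Fin M, ∑ k : Fin N, ∑ i ∈ univ.filter (fun i => i ≠ k),
          a i k * (X α i - X α k) ^ 2 * (π k * c α) := by
    rw [Finset.sum_comm]
    refine Finset.sum_congr rfl fun k _ => ?_
    rw [Finset.sum_comm]
    refine Finset.sum_congr rfl fun α _ => ?_
    rw [hval]
    refine Finset.sum_congr rfl fun i _ => ?_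
    rw [hupd]
    simp only [hPfact, hX]
  rw [hrw]
  exact Finset.sum_nonneg fun α _ =>
    key_single' N hN π hπpos a hpos hbal (X α) (c α) (hcpos α)
end

section
/- Let N ≥ 1 and let d : ℝ → (Fin N → ℝ) be such that each component t ↦ d_i(t) is differentiable at t₀ and d_i(t₀) ≠ 0 for every i. Define the fixed probability vector π by π_i = |d_i(t₀)| / (∑_j |d_j(t₀)|). Then the function f(t) = ∑_i d_i(t)² / π_i and the function g(t) = ( ∑_i |d_i(t)| )² are both differentiable at t₀ and f'(t₀) = g'(t₀). (Core computation of Theorem 3: after applying a filter that freezes the base point at |d|/‖d‖₁, the rate of change of the squared Fisher distance equals the rate of change of the squared trace distance, so trace-distance witnesses of non-Markovianity convert into Fisher-distance witnesses via post-processing.) -/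
open Finset

/-- Core computation of Theorem 3: with the base point frozen at
`π = |d(t₀)| / ‖d(t₀)‖₁`, the squared Fisher distance `f(t) = ∑ i, d i(t)² / π i` and the
squared trace distance `g(t) = (∑ i, |d i(t)|)²` are both differentiable at `t₀` and have
equal derivatives there. -/
theorem frozen_fisher_matches_trace_derivative (N : ℕ) (hN : 1 ≤ N)
    (d : ℝ → Fin N → ℝ) (t₀ : ℝ)
    (hdiff : ∀ i, DifferentiableAt ℝ (fun t => d t i) t₀)
    (hd0 : ∀ i, d t₀ i ≠ 0)
    (π : Fin N → ℝ) (hπ : ∀ i, π i = |d t₀ i| / ∑ j, |d t₀ j|) :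
    DifferentiableAt ℝ (fun t => ∑ i, (d t i) ^ 2 / π i) t₀ ∧
    DifferentiableAt ℝ (fun t => (∑ i, |d t i|) ^ 2) t₀ ∧
    deriv (fun t => ∑ i, (d t i) ^ 2 / π i) t₀
      = deriv (fun t => (∑ i, |d t i|) ^ 2) t₀ := by
  set c : Fin N → ℝ := fun i => deriv (fun t => d t i) t₀ with hc
  have hS : (0:ℝ) < ∑ j, |d t₀ j| := by
    apply Finset.sum_pos (fun j _ => abs_pos.2 (hd0 j))
    exact Finset.univ_nonempty_iff.2 (Fin.pos_iff_nonempty.1 hN)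
  have hf : HasDerivAt (fun t => ∑ i, (d t i) ^ 2 / π i)
      (∑ i, (2 * d t₀ i * c i) / π i) t₀ := by
    apply HasDerivAt.fun_sum
    intro i _
    simpa [div_eq_mul_inv, mul_comm, mul_assoc, mul_left_comm] using
      (((hdiff i).hasDerivAt.pow 2).div_const (π i))
  have hg1 : HasDerivAt (fun t => ∑ i, |d t i|)
      (∑ i, (SignType.sign (d t₀ i) : ℝ) * c i) t₀ := by
    apply HasDerivAt.fun_sum
    intro i _
    exact (hasDerivAt_abs (hd0 i)).comp t₀ (hdiff i).hasDerivAt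
  have hg : HasDerivAt (fun t => (∑ i, |d t i|) ^ 2)
      (2 * (∑ i, |d t₀ i|) * (∑ i, (SignType.sign (d t₀ i) : ℝ) * c i)) t₀ := by
    simpa [mul_comm, mul_assoc, mul_left_comm, pow_two] using hg1.fun_pow 2
  refine ⟨hf.differentiableAt, hg.differentiableAt, ?_⟩
  rw [hf.deriv, hg.deriv, Finset.mul_sum]
  apply Finset.sum_congr rfl
  intro i _
  rw [hπ i, div_div_eq_mul_div]
  rcases lt_or_gt_of_ne (hd0 i) with h | h
  · rw [abs_of_neg h]
    simp only [sign_neg h, SignType.coe_neg_one]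
    rw [div_eq_iff (neg_ne_zero.2 (hd0 i))]
    ring
  · rw [abs_of_pos h]
    simp only [sign_pos h, SignType.coe_one, one_mul]
    rw [div_eq_iff (hd0 i)]
    ring
end

section
/- Let T ∈ ℝ^{N×N} be column-stochastic, π : Fin N → ℝ strictly positive with (T π)_j > 0 for all j, and T̂_{ij} = π_i T_{ji}/(T π)_j the Bayes-recovery matrix. Then for every d : Fin N → ℝ, ∑_i d_i · (d − T̂ T d)_i / π_i ≥ 0; that is, the operator I − T̂T is positive semidefinite with respect to the weighted inner product ⟨a,b⟩_π = (1/2)∑_i a_i b_i/π_i. -/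
open Finset

/-- The operator `I − T̂T` is positive semidefinite with respect to the
weighted inner product `⟨a,b⟩_π = (1/2)∑ i, a i b i / π i`. -/
theorem bayes_recovery_positive_semidefinite (N : ℕ)
    (T : Matrix (Fin N) (Fin N) ℝ)
    (hTnonneg : ∀ i j, 0 ≤ T i j) (hTcol : ∀ j, ∑ i, T i j = 1)
    (π : Fin N → ℝ) (hπ : ∀ i, 0 < π i) (hTπ : ∀ j, 0 < T.mulVec π j)
    (That : Matrix (Fin N) (Fin N) ℝ)
    (hThat : ∀ i j, That i j = π i * T j i / T.mulVec π j)
    (d : Fin N → ℝ) :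
    0 ≤ ∑ i, d i * (d i - That.mulVec (T.mulVec d) i) / π i := by
  have hπne : ∀ i, π i ≠ 0 := fun i => (hπ i).ne'
  have hTπne : ∀ j, T.mulVec π j ≠ 0 := fun j => (hTπ j).ne'
  -- Cauchy–Schwarz per row j
  have key : ∀ j, (T.mulVec d j)^2 ≤ T.mulVec π j * ∑ i, T j i * (d i)^2 / π i := by
    intro j
    have h := Finset.sum_sq_le_sum_mul_sum_of_sq_eq_mul Finset.univ
      (r := fun i => T j i * d i) (f := fun i => T j i * π i)
      (g := fun i => T j i * (d i)^2 / π i)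
      (fun i _ => mul_nonneg (hTnonneg j i) (hπ i).le)
      (fun i _ => div_nonneg (mul_nonneg (hTnonneg j i) (sq_nonneg _)) (hπ i).le)
      (fun i _ => by field_simp [hπne i])
    simpa [Matrix.mulVec, dotProduct] using h
  have adj : ∑ i, d i * That.mulVec (T.mulVec d) i / π i
      = ∑ j, (T.mulVec d j)^2 / T.mulVec π j := by
    simp only [Matrix.mulVec, dotProduct, hThat]
    have : ∀ i, d i * (∑ j, π i * T j i / (∑ k, T j k * π k) * (∑ k, T j k * d k)) / π i
        = ∑ j, (∑ k, T j k * d k) / (∑ k, T j k * π k) * (T j i * d i) := by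
      intro i
      rw [Finset.mul_sum, Finset.sum_div]
      refine Finset.sum_congr rfl fun j _ => ?_
      have h1 : (∑ k, T j k * π k) ≠ 0 := hTπne j
      field_simp
      rw [div_eq_iff (hπne i)]
      ring
    rw [Finset.sum_congr rfl fun i _ => this i, Finset.sum_comm]
    refine Finset.sum_congr rfl fun j _ => ?_
    rw [← Finset.mul_sum]
    rw [sq, div_mul_eq_mul_div]
  have hsum : ∑ j, (T.mulVec d j)^2 / T.mulVec π j ≤ ∑ i, (d i)^2 / π i := by
    calc ∑ j, (T.mulVec d j)^2 / T.mulVec π j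
        ≤ ∑ j, ∑ i, T j i * (d i)^2 / π i := by
          refine Finset.sum_le_sum fun j _ => ?_
          rw [div_le_iff₀ (hTπ j)]
          calc (T.mulVec d j)^2 ≤ T.mulVec π j * ∑ i, T j i * (d i)^2 / π i := key j
            _ = (∑ i, T j i * (d i)^2 / π i) * T.mulVec π j := mul_comm _ _
      _ = ∑ i, (d i)^2 / π i := by
          rw [Finset.sum_comm]
          refine Finset.sum_congr rfl fun i _ => ?_
          rw [← Finset.sum_div, ← Finset.sum_mul, hTcol i, one_mul]
  have expand : ∑ i, d i * (d i - That.mulVec (T.mulVec d) i) / π i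
      = ∑ i, (d i)^2 / π i - ∑ i, d i * That.mulVec (T.mulVec d) i / π i := by
    rw [← Finset.sum_sub_distrib]
    refine Finset.sum_congr rfl fun i _ => ?_
    rw [mul_sub, sub_div, sq]
  rw [expand, adj, sub_nonneg]
  exact hsum
end

section
/- Let T : ℝ → ℝ^{N×N} be a family of matrices whose entries are differentiable at t₀, with each T_t column-stochastic, and let π : Fin N → ℝ be strictly positive with (T_t π)_j > 0 for all j and all t in a neighborhood of t₀. Define M_t = T̂_t T_t, where T̂_t is the Bayes-recovery matrix of T_t with prior π. Then t ↦ M_t is differentiable at t₀; denoting its entrywise derivative by Ṁ, for every fixed d : Fin N → ℝ the function f(t) = ∑_i (d_i − (M_t d)_i)² / π_i is differentiable at t₀ with f'(t₀) = −2 ∑_i (d_i − (M_{t₀} d)_i) (Ṁ d)_i / π_i = −2 ∑_i d_i ( (I − M_{t₀}) Ṁ d )_i / π_i. (Derivative identity underlying Theorem 4: the rate of change of the Fisher distance between the initial state π + d and the Bayes-retrodicted state π + M_t d is controlled by (I − M_t)Ṁ_t.) -/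
open Finset

/-- Derivative identity underlying Theorem 4: with `M_t = T̂_t T_t` the
Bayes-retrodicted evolution, `t ↦ M_t` is differentiable (entrywise) at `t₀`, and the
squared Fisher distance `f(t) = ∑ i, (d i − (M_t d) i)² / π i` between the initial state
`π + d` and the retrodicted state `π + M_t d` is differentiable at `t₀` with
`f'(t₀) = −2⟨d − M d, Ṁ d⟩ = −2⟨d, (I − M) Ṁ d⟩` (weighted by `1/π`). -/
theorem retrodicted_fisher_derivative (N : ℕ)
    (T : ℝ → Matrix (Fin N) (Fin N) ℝ) (t₀ : ℝ)
    (hTdiff : ∀ i j, DifferentiableAt ℝ (fun t => T t i j) t₀)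
    (hTnonneg : ∀ t i j, 0 ≤ T t i j) (hTcol : ∀ t j, ∑ i, T t i j = 1)
    (π : Fin N → ℝ) (hπ : ∀ i, 0 < π i)
    (hTπ : ∀ᶠ t in nhds t₀, ∀ j, 0 < (T t).mulVec π j)
    (M : ℝ → Matrix (Fin N) (Fin N) ℝ)
    (hM : ∀ t i j, M t i j = ∑ k, (π i * T t k i / (T t).mulVec π k) * T t k j) :
    (∀ i j, DifferentiableAt ℝ (fun t => M t i j) t₀) ∧
    ∀ d : Fin N → ℝ,
      DifferentiableAt ℝ (fun t => ∑ i, (d i - (M t).mulVec d i) ^ 2 / π i) t₀ ∧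
      deriv (fun t => ∑ i, (d i - (M t).mulVec d i) ^ 2 / π i) t₀
        = -2 * ∑ i, (d i - (M t₀).mulVec d i)
            * (∑ j, deriv (fun t => M t i j) t₀ * d j) / π i ∧
      deriv (fun t => ∑ i, (d i - (M t).mulVec d i) ^ 2 / π i) t₀
        = -2 * ∑ i, d i *
            ((∑ j, deriv (fun t => M t i j) t₀ * d j)
              - ∑ k, M t₀ i k * (∑ j, deriv (fun t => M t k j) t₀ * d j)) / π i := by
  have hD : ∀ j, 0 < (T t₀).mulVec π j := hTπ.self_of_nhds
  have hDdiff : ∀ k, DifferentiableAt ℝ (fun t => (T t).mulVec π k) t₀ := by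
    intro k
    have h : (fun t => (T t).mulVec π k) = fun t => ∑ l, T t k l * π l := by
      funext t; simp [Matrix.mulVec, dotProduct]
    rw [h]
    exact DifferentiableAt.fun_sum fun l _ => (hTdiff k l).mul_const _
  have hMdiff : ∀ i j, DifferentiableAt ℝ (fun t => M t i j) t₀ := by
    intro i j
    have h : (fun t => M t i j)
        = fun t => ∑ k, (π i * T t k i / (T t).mulVec π k) * T t k j :=
      funext fun t => hM t i j
    rw [h]
    exact DifferentiableAt.fun_sum fun k _ =>
      (((hTdiff k i).const_mul (π i)).div (hDdiff k) (hD k).ne').mul (hTdiff k j)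
  have hsym : ∀ i k, M t₀ i k * π k = M t₀ k i * π i := by
    intro i k
    rw [hM, hM, Finset.sum_mul, Finset.sum_mul]
    exact Finset.sum_congr rfl fun k' _ => by ring
  refine ⟨hMdiff, fun d => ?_⟩
  have hg : ∀ i, HasDerivAt (fun t => (M t).mulVec d i)
      (∑ j, deriv (fun t => M t i j) t₀ * d j) t₀ := by
    intro i
    have h : (fun t => (M t).mulVec d i) = fun t => ∑ j, M t i j * d j := by
      funext t; simp [Matrix.mulVec, dotProduct]
    rw [h]
    exact HasDerivAt.fun_sum fun j _ => ((hMdiff i j).hasDerivAt.mul_const (d j))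
  have hf : HasDerivAt (fun t => ∑ i, (d i - (M t).mulVec d i) ^ 2 / π i)
      (∑ i, ((2 : ℝ) * (d i - (M t₀).mulVec d i) ^ (2 - 1)
        * (0 - ∑ j, deriv (fun t => M t i j) t₀ * d j)) / π i) t₀ :=
    HasDerivAt.fun_sum fun i _ =>
      (((hasDerivAt_const t₀ (d i)).sub (hg i)).pow 2).div_const (π i)
  have e1 : deriv (fun t => ∑ i, (d i - (M t).mulVec d i) ^ 2 / π i) t₀
      = -2 * ∑ i, (d i - (M t₀).mulVec d i)
          * (∑ j, deriv (fun t => M t i j) t₀ * d j) / π i := by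
    rw [hf.deriv, Finset.mul_sum]
    exact Finset.sum_congr rfl fun i _ => by ring
  refine ⟨hf.differentiableAt, e1, ?_⟩
  rw [e1]
  congr 1
  -- reduce to the self-adjointness identity
  have hmv : ∀ i, (M t₀).mulVec d i = ∑ k, M t₀ i k * d k := by
    intro i; simp [Matrix.mulVec, dotProduct]
  have key : ∑ i, (M t₀).mulVec d i * (∑ j, deriv (fun t => M t i j) t₀ * d j) / π i
      = ∑ i, d i * (∑ k, M t₀ i k * (∑ j, deriv (fun t => M t k j) t₀ * d j)) / π i := by
    calc ∑ i, (M t₀).mulVec d i * (∑ j, deriv (fun t => M t i j) t₀ * d j) / π i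
        = ∑ i, ∑ k, M t₀ i k * d k * (∑ j, deriv (fun t => M t i j) t₀ * d j) / π i := by
          refine Finset.sum_congr rfl fun i _ => ?_
          rw [hmv i, Finset.sum_mul, Finset.sum_div]
      _ = ∑ i, ∑ k, M t₀ k i * d k * (∑ j, deriv (fun t => M t i j) t₀ * d j) / π k := by
          refine Finset.sum_congr rfl fun i _ => Finset.sum_congr rfl fun k _ => ?_
          rw [div_eq_div_iff (hπ i).ne' (hπ k).ne']
          linear_combination (d k * (∑ j, deriv (fun t => M t i j) t₀ * d j)) * hsym i k
      _ = ∑ k, ∑ i, M t₀ k i * d k * (∑ j, deriv (fun t => M t i j) t₀ * d j) / π k :=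
          Finset.sum_comm
      _ = ∑ k, d k * (∑ i, M t₀ k i * (∑ j, deriv (fun t => M t i j) t₀ * d j)) / π k := by
          refine Finset.sum_congr rfl fun k _ => ?_
          rw [Finset.mul_sum, Finset.sum_div]
          exact Finset.sum_congr rfl fun i _ => by ring
  calc ∑ i, (d i - (M t₀).mulVec d i) * (∑ j, deriv (fun t => M t i j) t₀ * d j) / π i
      = (∑ i, d i * (∑ j, deriv (fun t => M t i j) t₀ * d j) / π i)
        - ∑ i, (M t₀).mulVec d i * (∑ j, deriv (fun t => M t i j) t₀ * d j) / π i := by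
        rw [← Finset.sum_sub_distrib]
        exact Finset.sum_congr rfl fun i _ => by ring
    _ = ∑ i, d i *
          ((∑ j, deriv (fun t => M t i j) t₀ * d j)
            - ∑ k, M t₀ i k * (∑ j, deriv (fun t => M t k j) t₀ * d j)) / π i := by
        rw [key, ← Finset.sum_sub_distrib]
        exact Finset.sum_congr rfl fun i _ => by ring
end

section
/- Let R ∈ ℝ^{2×2} be the rate matrix with off-diagonal entries R_{01} = a and R_{10} = b and diagonal entries R_{00} = −b, R_{11} = −a, where a < 0 < b and b > −a. Then for every d : Fin 2 → ℝ with d_0 + d_1 = 0 and d_0 ≠ 0, one has ∑_i sign(d_i) · (R d)_i < 0, where (R d)_i = ∑_j R_{ij} d_j. (A non-Markovian two-state generator under which the trace distance between any two probability vectors strictly decreases: the trace distance cannot witness all non-Markovian classical evolutions without ancillas.) -/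
open Finset

/-- A non-Markovian two-state generator (rate `a = a_{1←2} < 0`, `b > -a`)
under which the trace distance between any two probability vectors strictly decreases:
the trace distance cannot witness all non-Markovian classical evolutions without
ancillas. -/
theorem nonMarkovian_two_state_trace_contraction (a b : ℝ)
    (ha : a < 0) (hb : 0 < b) (hab : b > -a)
    (R : Matrix (Fin 2) (Fin 2) ℝ)
    (hR : R = !![-b, a; b, -a])
    (d : Fin 2 → ℝ) (hd0 : d 0 + d 1 = 0) (hd : d 0 ≠ 0) :
    ∑ i, Real.sign (d i) * R.mulVec d i < 0 := by
  have h1 : d 1 = -d 0 := by linarith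
  have hs : Real.sign (d 1) = -Real.sign (d 0) := by rw [h1, Real.sign_neg]
  subst hR
  simp [Matrix.mulVec, dotProduct, Fin.sum_univ_two]
  rw [hs, h1]
  ring_nf
  have : Real.sign (d 0) * d 0 = |d 0| := by
    rcases lt_or_gt_of_ne hd with h | h
    · rw [Real.sign_of_neg h, abs_of_neg h]; ring
    · rw [Real.sign_of_pos h, abs_of_pos h]; ring
  nlinarith [abs_pos.mpr hd, this]
end

section
/- Let R ∈ ℝ^{N×N} have zero column sums (∑_i R_{ij} = 0 for all j) and suppose R_{i₀ j₀} < 0 for some i₀ ≠ j₀. Then there exist a vector d : Fin N × Fin 2 → ℝ with ∑_{i,α} d_{(i,α)} = 0 and a constant δ₀ > 0 such that for all 0 < δt ≤ δ₀, ∑_{i,α} | d_{(i,α)} + δt · ∑_j R_{ij} d_{(j,α)} | > ∑_{i,α} | d_{(i,α)} |. (Lemma 1, classical infinitesimal version: attaching a two-dimensional ancilla on which the dynamics acts trivially, every non-Markovian classical generator is witnessed by a strict revival of the trace distance between suitably prepared states.) -/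
open Finset

/-- Lemma 1, classical infinitesimal version: with a two-dimensional
ancilla on which the dynamics acts trivially, every non-Markovian classical generator
(some negative off-diagonal rate) is witnessed by a strict revival of the trace distance
between suitably prepared states. -/
theorem ancilla_trace_distance_witness (N : ℕ)
    (R : Matrix (Fin N) (Fin N) ℝ)
    (hcol : ∀ j, ∑ i, R i j = 0)
    (i₀ j₀ : Fin N) (hij : i₀ ≠ j₀) (hneg : R i₀ j₀ < 0) :
    ∃ (d : Fin N × Fin 2 → ℝ),
      (∑ x : Fin N × Fin 2, d x = 0) ∧
      ∃ δ₀ > (0 : ℝ), ∀ δt : ℝ, 0 < δt → δt ≤ δ₀ →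
        ∑ x : Fin N × Fin 2, |d x| <
          ∑ x : Fin N × Fin 2, |d x + δt * ∑ j, R x.1 j * d (j, x.2)| := by
  classical
  set s : Fin 2 → ℝ := fun α => if α = 0 then 1 else -1 with hs
  set e : Fin N → ℝ := fun i => if i = j₀ then 1 else 0 with he
  set d : Fin N × Fin 2 → ℝ := fun x => s x.2 * e x.1 with hd
  have habs_s : ∀ α, |s α| = 1 := by
    intro α; fin_cases α <;> simp [hs]
  refine ⟨d, ?_, 1 / (2 * (|R j₀ j₀| + 1)), by positivity, ?_⟩
  · rw [Fintype.sum_prod_type]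
    have : ∀ i : Fin N, ∑ α : Fin 2, d (i, α) = 0 := by
      intro i
      simp [hd, Fin.sum_univ_two, hs]
    simp [this]
  · intro δt hpos hle
    have hRd : ∀ (i : Fin N) (α : Fin 2), ∑ j, R i j * d (j, α) = s α * R i j₀ := by
      intro i α
      rw [Finset.sum_eq_single j₀]
      · simp [hd, he]; ring
      · intro j _ hj; simp [hd, he, hj]
      · simp
    have hterm : ∀ (i : Fin N) (α : Fin 2),
        |d (i, α) + δt * ∑ j, R i j * d (j, α)| = |e i + δt * R i j₀| := by
      intro i α
      rw [hRd]
      have : d (i, α) + δt * (s α * R i j₀) = s α * (e i + δt * R i j₀) := by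
        simp [hd]; ring
      rw [this, abs_mul, habs_s, one_mul]
    have hLHS : ∑ x : Fin N × Fin 2, |d x| = 2 := by
      rw [Fintype.sum_prod_type]
      have : ∀ i : Fin N, ∑ α : Fin 2, |d (i, α)| = 2 * |e i| := by
        intro i
        simp [Fin.sum_univ_two, hd, abs_mul, habs_s]
      rw [Finset.sum_congr rfl fun i _ => this i, ← Finset.mul_sum]
      have h1 : ∑ i : Fin N, |e i| = 1 := by
        rw [Finset.sum_eq_single j₀]
        · simp [he]
        · intro j _ hj; simp [he, hj]
        · simp
      rw [h1]; norm_num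
    have hRHS : ∑ x : Fin N × Fin 2, |d x + δt * ∑ j, R x.1 j * d (j, x.2)|
        = 2 * ∑ i : Fin N, |e i + δt * R i j₀| := by
      rw [Fintype.sum_prod_type]
      have : ∀ i : Fin N, ∑ α : Fin 2, |d (i, α) + δt * ∑ j, R i j * d (j, α)|
          = 2 * |e i + δt * R i j₀| := by
        intro i
        rw [Fin.sum_univ_two, hterm, hterm]; ring
      rw [Finset.sum_congr rfl fun i _ => this i, ← Finset.mul_sum]
    rw [hLHS, hRHS]
    -- split off j₀
    have hj₀mem : j₀ ∈ (Finset.univ : Finset (Fin N)) := Finset.mem_univ j₀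
    have hsplit : ∑ i : Fin N, |e i + δt * R i j₀|
        = (∑ i ∈ Finset.univ \ {j₀}, |δt * R i j₀|) + |1 + δt * R j₀ j₀| := by
      rw [Finset.sum_eq_sum_sdiff_singleton_add hj₀mem fun i => |e i + δt * R i j₀|]
      congr 1
      · apply Finset.sum_congr rfl; intro i hi
        rw [Finset.mem_sdiff, Finset.mem_singleton] at hi
        simp [he, hi.2]
      · simp [he]
    have hδR : δt * |R j₀ j₀| < 1 := by
      calc δt * |R j₀ j₀| ≤ (1 / (2 * (|R j₀ j₀| + 1))) * |R j₀ j₀| := by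
            apply mul_le_mul_of_nonneg_right hle (abs_nonneg _)
        _ < 1 := by
            rw [div_mul_eq_mul_div, one_mul, div_lt_one (by positivity)]
            nlinarith [abs_nonneg (R j₀ j₀)]
    have habs1 : |1 + δt * R j₀ j₀| = 1 + δt * R j₀ j₀ := by
      rw [abs_of_nonneg]
      nlinarith [neg_abs_le (R j₀ j₀), abs_nonneg (R j₀ j₀)]
    have hcolsplit : R j₀ j₀ = -∑ i ∈ Finset.univ \ {j₀}, R i j₀ := by
      have h := hcol j₀
      rw [Finset.sum_eq_sum_sdiff_singleton_add hj₀mem fun i => R i j₀] at h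
      linarith
    have hkey : 0 < ∑ i ∈ Finset.univ \ {j₀}, (|R i j₀| - R i j₀) := by
      have hi₀ : i₀ ∈ Finset.univ \ {j₀} := by
        rw [Finset.mem_sdiff, Finset.mem_singleton]; exact ⟨Finset.mem_univ _, hij⟩
      exact Finset.sum_pos' (fun i _ => sub_nonneg.2 (le_abs_self _))
        ⟨i₀, hi₀, by rw [abs_of_neg hneg]; linarith⟩
    have habsδ : ∀ i, |δt * R i j₀| = δt * |R i j₀| := by
      intro i; rw [abs_mul, abs_of_pos hpos]
    rw [hsplit, habs1]
    have : ∑ i ∈ Finset.univ \ {j₀}, |δt * R i j₀|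
        = δt * ∑ i ∈ Finset.univ \ {j₀}, |R i j₀| := by
      rw [Finset.mul_sum]; exact Finset.sum_congr rfl fun i _ => habsδ i
    rw [this, hcolsplit]
    rw [Finset.sum_sub_distrib] at hkey
    nlinarith
end
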